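/- arXiv:2010.15803 — 3 statements merged into one kernel-verified Lean document; each statement's English description precedes it below -/
import Mathlib

section
/- Let G be a finite connected simple graph whose vertex set is partitioned into a clique K and an independent set I, with K nonempty. For each c ∈ K, let T_c be a spanning tree of G such that d_{T_c}(c,v) = d_G(c,v) for every vertex v (a shortest-path tree rooted at c). Then for all vertices u, v of G, min_{c∈K} d_{T_c}(u,v) = d_G(u,v); that is, the trivial embedding of G into the system of trees (T_c)_{c∈K} is isometric. -/
theorem stmt9 {V : Type*} [Fintype V] (G : SimpleGraph V)
    (hconn : G.Connected)
    (K I : Finset V)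
    (hcover : ∀ v : V, v ∈ K ∨ v ∈ I) (hdisj : Disjoint K I)
    (hK : G.IsClique (K : Set V))
    (hI : ∀ u ∈ I, ∀ v ∈ I, ¬ G.Adj u v)
    (hKne : K.Nonempty)
    (T : V → SimpleGraph V)
    (hsub : ∀ c ∈ K, T c ≤ G)
    (htree : ∀ c ∈ K, (T c).IsTree)
    (hSPT : ∀ c ∈ K, ∀ v : V, (T c).dist c v = G.dist c v)
    (u v : V) :
    K.inf' hKne (fun c => (T c).dist u v) = G.dist u v := by
  have hlow : ∀ c ∈ K, G.dist u v ≤ (T c).dist u v := by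
    intro c hc
    exact SimpleGraph.Reachable.dist_anti (hsub c hc) (((htree c hc).isConnected) u v)
  -- upper bound machinery: if d_G(u,c)+d_G(c,v) = d_G(u,v) then T c achieves it
  have key : ∀ c ∈ K, G.dist u c + G.dist c v = G.dist u v →
      (T c).dist u v ≤ G.dist u v := by
    intro c hc h
    have hTc := (htree c hc).isConnected
    calc (T c).dist u v ≤ (T c).dist u c + (T c).dist c v := hTc.dist_triangle
      _ = G.dist u c + G.dist c v := by
          rw [SimpleGraph.dist_comm (G := T c) (u := u) (v := c), hSPT c hc, hSPT c hc,
            SimpleGraph.dist_comm (G := G) (u := c) (v := u)]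
      _ = G.dist u v := h
  refine le_antisymm ?_ (Finset.le_inf' hKne _ hlow)
  rcases hcover u with hu | hu
  · -- u ∈ K : take c = u
    have : (T u).dist u v ≤ G.dist u v := by
      apply key u hu
      rw [SimpleGraph.dist_self]
      omega
    exact le_trans (Finset.inf'_le _ hu) this
  · -- u ∈ I
    rcases eq_or_ne u v with rfl | huv
    · obtain ⟨c, hc⟩ := hKne
      refine le_trans (Finset.inf'_le _ hc) ?_
      show (T c).dist u u ≤ G.dist u u
      rw [SimpleGraph.dist_self, SimpleGraph.dist_self]
    · have hd0 : G.dist u v ≠ 0 := by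
        rw [SimpleGraph.dist_ne_zero_iff_ne_and_reachable]
        exact ⟨huv, hconn u v⟩
      obtain ⟨p, hp⟩ := SimpleGraph.exists_walk_of_dist_ne_zero hd0
      -- p nonempty
      cases p with
      | nil => simp at hp; simp at hd0
      | cons hadj q =>
        rename_i w
        have hwK : w ∈ K := by
          rcases hcover w with h | h
          · exact h
          · exact absurd hadj (hI u hu w h)
        have hlen : q.length + 1 = G.dist u v := by simpa using hp
        have hqv : G.dist w v ≤ q.length := SimpleGraph.dist_le q
        have htri : G.dist u v ≤ G.dist u w + G.dist w v := hconn.dist_triangle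
        have huw : G.dist u w = 1 := SimpleGraph.dist_eq_one_iff_adj.mpr hadj
        have hdwv : G.dist u w + G.dist w v = G.dist u v := by omega
        exact le_trans (Finset.inf'_le _ hwK) (key w hwK hdwv)
end

section
/- Let G be a finite connected simple graph whose vertex set V is partitioned into a clique K and an independent set I, with K nonempty. Then there exist trees (T_u)_{u∈K}, each of diameter at most 4, and maps φ_u : V → V(T_u) such that for all v, v' ∈ V: if d_G(v,v') ≥ 3 then Σ_{u∈K} d_{T_u}(φ_u(v),φ_u(v')) = 4·|K|, and if d_G(v,v') ≤ 2 then Σ_{u∈K} d_{T_u}(φ_u(v),φ_u(v')) ≤ 4·|K| − 1. In particular, the map v ↦ (φ_u(v))_{u∈K} into the Cartesian product of the trees (T_u)_{u∈K} (whose distance is the sum of the coordinatewise tree distances) separates the pairs at distance ≥ 3 in G from all other pairs. -/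
open SimpleGraph

namespace SpiderStmt10

variable {A : Type}

abbrev SW (A : Type) : Type := Option (A ⊕ A)

def spider (f : A → A) : SimpleGraph (SW A) where
  Adj a b := (∃ w, a = none ∧ b = some (Sum.inl w)) ∨
    (∃ w, b = none ∧ a = some (Sum.inl w)) ∨
    (∃ x, a = some (Sum.inl (f x)) ∧ b = some (Sum.inr x)) ∨
    (∃ x, b = some (Sum.inl (f x)) ∧ a = some (Sum.inr x))
  symm := by
    refine ⟨?_⟩
    intro a b h
    rcases h with ⟨w, h1, h2⟩ | ⟨w, h1, h2⟩ | ⟨x, h1, h2⟩ | ⟨x, h1, h2⟩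
    · exact Or.inr (Or.inl ⟨w, h1, h2⟩)
    · exact Or.inl ⟨w, h1, h2⟩
    · exact Or.inr (Or.inr (Or.inr ⟨x, h1, h2⟩))
    · exact Or.inr (Or.inr (Or.inl ⟨x, h1, h2⟩))
  loopless := by
    refine ⟨?_⟩
    rintro a (⟨w, rfl, h⟩ | ⟨w, rfl, h⟩ | ⟨x, rfl, h⟩ | ⟨x, rfl, h⟩) <;> simp_all

variable {f : A → A}

lemma adj_root_mid (w : A) : (spider f).Adj none (some (Sum.inl w)) := Or.inl ⟨w, rfl, rfl⟩

lemma adj_mid_leaf (x : A) : (spider f).Adj (some (Sum.inl (f x))) (some (Sum.inr x)) :=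
  Or.inr (Or.inr (Or.inl ⟨x, rfl, rfl⟩))

lemma adj_root_inv {b : SW A} (h : (spider f).Adj none b) : ∃ w, b = some (Sum.inl w) := by
  rcases h with ⟨w, h1, h2⟩ | ⟨w, h1, h2⟩ | ⟨x, h1, h2⟩ | ⟨x, h1, h2⟩
  · exact ⟨w, h2⟩
  · simp at h2
  · simp at h1
  · simp at h2

lemma adj_leaf_inv {x : A} {b : SW A} (h : (spider f).Adj (some (Sum.inr x)) b) :
    b = some (Sum.inl (f x)) := by
  rcases h with ⟨w, h1, h2⟩ | ⟨w, h1, h2⟩ | ⟨y, h1, h2⟩ | ⟨y, h1, h2⟩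
  · simp at h1
  · simp at h2
  · simp at h1
  · obtain rfl : y = x := by simpa using h2.symm
    exact h1

lemma adj_mid_inv {w : A} {b : SW A} (h : (spider f).Adj (some (Sum.inl w)) b) :
    b = none ∨ ∃ x, f x = w ∧ b = some (Sum.inr x) := by
  rcases h with ⟨w', h1, h2⟩ | ⟨w', h1, h2⟩ | ⟨y, h1, h2⟩ | ⟨y, h1, h2⟩
  · simp at h1
  · exact Or.inl h1
  · exact Or.inr ⟨y, by simpa using h1.symm, h2⟩
  · simp at h2

def level : SW A → ℕ
  | none => 0
  | some (Sum.inl _) => 1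
  | some (Sum.inr _) => 2

lemma adj_level {a b : SW A} (h : (spider f).Adj a b) : (level a + level b) % 2 = 1 := by
  rcases h with ⟨w, h1, h2⟩ | ⟨w, h1, h2⟩ | ⟨x, h1, h2⟩ | ⟨x, h1, h2⟩ <;> subst h1 <;> subst h2 <;>
    simp [level]

lemma walk_parity : ∀ {a b : SW A} (p : (spider f).Walk a b),
    (p.length + level a + level b) % 2 = 0 := by
  intro a b p
  induction p with
  | nil => simp only [Walk.length_nil]; omega
  | cons h p ih =>
    have := adj_level h
    simp only [Walk.length_cons]
    omega

lemma reachable_root (a : SW A) : (spider f).Reachable a none := by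
  match a with
  | none => exact Reachable.refl _
  | some (Sum.inl w) => exact (adj_root_mid w).symm.reachable
  | some (Sum.inr x) =>
    exact ((adj_mid_leaf x).symm.reachable).trans (adj_root_mid (f x)).symm.reachable

lemma spider_connected : (spider f).Connected := by
  haveI : Nonempty (SW A) := ⟨none⟩
  have h : (spider f).Preconnected := fun a b => (reachable_root a).trans (reachable_root b).symm
  exact Connected.mk h

lemma dist_root_le (a : SW A) : (spider f).dist a none ≤ 2 := by
  match a with
  | none => simp [dist_self]
  | some (Sum.inl w) =>
    have := dist_le (Walk.cons (adj_root_mid (f := f) w).symm Walk.nil)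
    simp at this
    omega
  | some (Sum.inr x) =>
    have := dist_le (Walk.cons (adj_mid_leaf (f := f) x).symm
      (Walk.cons (adj_root_mid (f x)).symm Walk.nil))
    simpa using this

lemma dist_le_four (a b : SW A) : (spider f).dist a b ≤ 4 := by
  have h1 := dist_root_le (f := f) a
  have h2 := dist_root_le (f := f) b
  have h3 := (spider_connected (f := f)).dist_triangle (u := a) (v := (none : SW A)) (w := b)
  have h4 : (spider f).dist none b = (spider f).dist b none := dist_comm ..
  omega

lemma dist_leaf_same {x y : A} (h : f x = f y) :
    (spider f).dist (some (Sum.inr x)) (some (Sum.inr y)) ≤ 2 := by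
  have hadj : (spider f).Adj (some (Sum.inl (f x))) (some (Sum.inr y)) := by
    rw [h]; exact adj_mid_leaf y
  have := dist_le (Walk.cons (adj_mid_leaf (f := f) x).symm (Walk.cons hadj Walk.nil))
  simpa using this

lemma dist_leaf_ne {x y : A} (h : f x ≠ f y) :
    (spider f).dist (some (Sum.inr x)) (some (Sum.inr y)) = 4 := by
  have hne : (some (Sum.inr x) : SW A) ≠ some (Sum.inr y) := by
    intro hE
    simp only [Option.some.injEq, Sum.inr.injEq] at hE
    subst hE
    exact h rfl
  have hle := dist_le_four (f := f) (some (Sum.inr x)) (some (Sum.inr y))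
  have hpos := (spider_connected (f := f)).pos_dist_of_ne hne
  obtain ⟨p, hp⟩ :=
    ((spider_connected (f := f)).preconnected (some (Sum.inr x))
      (some (Sum.inr y))).exists_walk_length_eq_dist
  have hpar := walk_parity (f := f) p
  have hlev1 : level (some (Sum.inr x) : SW A) = 2 := rfl
  have hlev2 : level (some (Sum.inr y) : SW A) = 2 := rfl
  have hne2 : (spider f).dist (some (Sum.inr x)) (some (Sum.inr y)) ≠ 2 := by
    intro h2
    rw [h2] at hp
    cases p with
    | nil => simp at hp
    | cons ha q =>
      cases q with
      | nil => simp at hp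
      | cons hb r =>
        have hr : r.length = 0 := by
          simp only [Walk.length_cons] at hp; omega
        have hend := Walk.eq_of_length_eq_zero hr
        subst hend
        have h1 := adj_leaf_inv (f := f) ha
        have h2' := adj_leaf_inv (f := f) hb.symm
        rw [h1] at h2'
        simp only [Option.some.injEq, Sum.inl.injEq] at h2'
        exact h h2'
  rw [hlev1, hlev2] at hpar
  omega

lemma exists_two_neighbors {α : Type*} {G : SimpleGraph α} {v : α} {c : G.Walk v v}
    (hc : c.IsCycle) :
    ∃ y z, y ≠ z ∧ G.Adj v y ∧ G.Adj v z ∧ y ∈ c.support ∧ z ∈ c.support := by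
  classical
  cases c with
  | nil => exact absurd rfl hc.ne_nil
  | cons h q =>
    rename_i y
    have hq : q.IsPath := ((Walk.cons_isCycle_iff q h).mp hc).1
    have hlen : 3 ≤ (Walk.cons h q).length := hc.three_le_length
    have hqlen : 2 ≤ q.length := by
      simp only [Walk.length_cons] at hlen; omega
    have hvy : v ≠ y := h.ne
    obtain ⟨z, h', q'', hrw⟩ := Walk.exists_eq_cons_of_ne hvy q.reverse
    have hq'' : q''.IsPath := by
      have hrp := hq.reverse
      rw [hrw] at hrp
      exact hrp.of_cons
    have hyz : y ≠ z := by
      rintro rfl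
      have hnil : q'' = Walk.nil := Walk.isPath_iff_eq_nil.mp hq''
      have hql : q.reverse.length = q.length := Walk.length_reverse q
      rw [hrw, hnil] at hql
      simp at hql
      omega
    refine ⟨y, z, hyz, h, h', ?_, ?_⟩
    · simp [Walk.support_cons, Walk.start_mem_support]
    · have hz : z ∈ q.reverse.support := by
        rw [hrw]
        simp [Walk.support_cons, Walk.start_mem_support]
      rw [Walk.support_reverse, List.mem_reverse] at hz
      simp [Walk.support_cons, hz]

lemma mem_support_rotate {α : Type*} [DecidableEq α] {G : SimpleGraph α} {v u b : α}
    {c : G.Walk v v} (h : u ∈ c.support) (hb : b ∈ (c.rotate u h).support) : b ∈ c.support := by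
  rw [Walk.support_eq_cons, List.mem_cons] at hb
  rcases hb with rfl | hb
  · exact h
  · have hperm := Walk.support_rotate c u h
    have hbt : b ∈ c.support.tail := hperm.mem_iff.mp hb
    rw [Walk.support_eq_cons (p := c)]
    exact List.mem_cons_of_mem _ hbt

lemma spider_acyclic : (spider f).IsAcyclic := by
  classical
  intro v c hc
  have no_leaf : ∀ a : A, some (Sum.inr a) ∉ c.support := by
    intro a ha
    have hc' := hc.rotate ha
    obtain ⟨y, z, hyz, hy, hz, _, _⟩ := exists_two_neighbors hc'
    rw [adj_leaf_inv hy, adj_leaf_inv hz] at hyz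
    exact hyz rfl
  have no_mid : ∀ w : A, some (Sum.inl w) ∈ c.support → False := by
    intro w hw
    have hc' := hc.rotate hw
    obtain ⟨y, z, hyz, hy, hz, hys, hzs⟩ := exists_two_neighbors hc'
    rcases adj_mid_inv hy with rfl | ⟨x, _, rfl⟩
    · rcases adj_mid_inv hz with rfl | ⟨x, _, rfl⟩
      · exact hyz rfl
      · exact no_leaf x (mem_support_rotate hw hzs)
    · exact no_leaf x (mem_support_rotate hw hys)
  match v with
  | some (Sum.inr a) => exact no_leaf a c.start_mem_support
  | some (Sum.inl w) => exact no_mid w c.start_mem_support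
  | none =>
    obtain ⟨y, z, hyz, hy, hz, hys, hzs⟩ := exists_two_neighbors hc
    obtain ⟨w, rfl⟩ := adj_root_inv hy
    exact no_mid w hys

lemma spider_isTree : (spider f).IsTree :=
  ⟨spider_connected, spider_acyclic⟩

end SpiderStmt10


theorem stmt10 {V : Type*} [Fintype V] (G : SimpleGraph V)
    (hconn : G.Connected)
    (K I : Finset V)
    (hcover : ∀ v : V, v ∈ K ∨ v ∈ I) (hdisj : Disjoint K I)
    (hK : G.IsClique (K : Set V))
    (hI : ∀ u ∈ I, ∀ v ∈ I, ¬ G.Adj u v)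
    (hKne : K.Nonempty) :
    ∃ (W : V → Type) (_ : ∀ u, Fintype (W u)) (T : ∀ u, SimpleGraph (W u))
      (φ : ∀ u, V → W u),
      (∀ u ∈ K, (T u).IsTree) ∧
      (∀ u ∈ K, ∀ a b : W u, (T u).dist a b ≤ 4) ∧
      (∀ v v' : V,
        (3 ≤ G.dist v v' →
          ∑ u ∈ K, (T u).dist (φ u v) (φ u v') = 4 * K.card) ∧
        (G.dist v v' ≤ 2 →
          ∑ u ∈ K, (T u).dist (φ u v) (φ u v') ≤ 4 * K.card - 1)) := by
  classical
  have hKI : ∀ {w : V}, w ∉ K → w ∈ I := fun {w} hw => (hcover w).resolve_left hw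
  have hKInot : ∀ {w : V}, w ∈ K → w ∉ I := fun {w} hw =>
    Finset.disjoint_left.mp hdisj hw
  have hadjK : ∀ {v w : V}, v ∈ I → G.Adj v w → w ∈ K := by
    intro v w hv h
    by_contra hw
    exact hI v hv w (hKI hw) h
  -- any vertex of K is within distance 2 of everything
  have hdist2 : ∀ x y : V, x ∈ K → G.dist x y ≤ 2 := by
    intro x y hx
    by_cases hxy : x = y
    · subst hxy; simp [dist_self]
    rcases hcover y with hy | hy
    · have hadj : G.Adj x y := hK (by simpa using hx) (by simpa using hy) hxy
      have := SimpleGraph.dist_eq_one_iff_adj.mpr hadj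
      omega
    · -- y ∈ I : find a neighbor of y
      obtain ⟨p⟩ := hconn y x
      cases p with
      | nil => exact absurd rfl hxy
      | cons h q =>
        rename_i w
        have hwK : w ∈ K := hadjK hy h
        by_cases hwx : w = x
        · subst hwx
          have := SimpleGraph.dist_eq_one_iff_adj.mpr h.symm
          omega
        · have hadjxw : G.Adj x w := hK (by simpa using hx) (by simpa using hwK) (Ne.symm hwx)
          have := SimpleGraph.dist_le (Walk.cons hadjxw (Walk.cons h.symm Walk.nil))
          simpa using this
  set n := Fintype.card V with hn
  let e : V ≃ Fin n := Fintype.equivFin V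
  let fb : V → V → V := fun u v => if v ∈ K ∨ G.Adj u v then u else v
  let f : V → Fin n → Fin n := fun u i => e (fb u (e.symm i))
  have hf : ∀ u v, f u (e v) = e (fb u v) := by
    intro u v; simp [f]
  refine ⟨fun _ => SpiderStmt10.SW (Fin n), fun _ => inferInstance,
    fun u => SpiderStmt10.spider (f u), fun u v => some (Sum.inr (e v)), ?_, ?_, ?_⟩
  · intro u _; exact SpiderStmt10.spider_isTree
  · intro u _ a b; exact SpiderStmt10.dist_le_four a b
  intro v v'
  constructor
  · -- far case
    intro h3
    have hvK : v ∉ K := by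
      intro hv
      have := hdist2 v v' hv
      omega
    have hv'K : v' ∉ K := by
      intro hv
      have := hdist2 v' v hv
      rw [SimpleGraph.dist_comm] at this
      omega
    have hvI := hKI hvK
    have hv'I := hKI hv'K
    have hne : v ≠ v' := by
      intro hE; subst hE; simp [SimpleGraph.dist_self] at h3
    have hterm : ∀ u ∈ K,
        (SpiderStmt10.spider (f u)).dist (some (Sum.inr (e v))) (some (Sum.inr (e v'))) = 4 := by
      intro u hu
      apply SpiderStmt10.dist_leaf_ne
      rw [hf, hf]
      intro hE
      have hEb : fb u v = fb u v' := e.injective hE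
      by_cases hA : G.Adj u v
      · have hA' : ¬ G.Adj u v' := by
          intro hA'
          have := SimpleGraph.dist_le (Walk.cons hA.symm (Walk.cons hA' Walk.nil))
          simp at this; omega
        have h1 : fb u v = u := by simp [fb, hA]
        have h2 : fb u v' = v' := by simp [fb, hv'K, hA']
        rw [h1, h2] at hEb
        exact (hKInot hu) (hEb ▸ hv'I)
      · have h1 : fb u v = v := by simp [fb, hvK, hA]
        rw [h1] at hEb
        by_cases hA' : G.Adj u v'
        · have h2 : fb u v' = u := by simp [fb, hA']
          rw [h2] at hEb
          exact (hKInot hu) (hEb ▸ hvI)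
        · have h2 : fb u v' = v' := by simp [fb, hv'K, hA']
          rw [h2] at hEb
          exact hne hEb
    rw [Finset.sum_congr rfl hterm, Finset.sum_const, smul_eq_mul, mul_comm]
  · -- near case
    intro h2
    have hcard : 1 ≤ K.card := hKne.card_pos
    obtain ⟨u₀, hu₀, hsame⟩ : ∃ u₀ ∈ K, fb u₀ v = fb u₀ v' := by
      by_cases hvv : v = v'
      · exact ⟨hKne.choose, hKne.choose_spec, by rw [hvv]⟩
      rcases hcover v with hv | hv
      · rcases hcover v' with hv' | hv'
        · exact ⟨hKne.choose, hKne.choose_spec, by simp [fb, hv, hv']⟩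
        · -- v ∈ K, v' ∈ I : take a neighbor of v'
          obtain ⟨p⟩ := hconn v' v
          cases p with
          | nil => exact absurd rfl hvv
          | cons h q =>
            rename_i w
            have hwK : w ∈ K := hadjK hv' h
            exact ⟨w, hwK, by simp [fb, hv, h.symm]⟩
      · rcases hcover v' with hv' | hv'
        · obtain ⟨p⟩ := hconn v v'
          cases p with
          | nil => exact absurd rfl hvv
          | cons h q =>
            rename_i w
            have hwK : w ∈ K := hadjK hv h
            exact ⟨w, hwK, by simp [fb, hv', h.symm]⟩
        · -- both in I : common neighbor
          have hnadj : ¬ G.Adj v v' := hI v hv v' hv'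
          have hd1 : G.dist v v' ≠ 1 := by
            intro h1
            exact hnadj (SimpleGraph.dist_eq_one_iff_adj.mp h1)
          have hd0 : G.dist v v' ≠ 0 := by
            have := hconn.pos_dist_of_ne hvv
            omega
          have hd : G.dist v v' = 2 := by omega
          obtain ⟨p, hp⟩ := (hconn v v').exists_walk_length_eq_dist
          rw [hd] at hp
          cases p with
          | nil => simp at hp
          | cons ha q =>
            cases q with
            | nil => simp at hp
            | cons hb r =>
              rename_i w w2
              have hr : r.length = 0 := by
                simp only [Walk.length_cons] at hp; omega
              have hend := Walk.eq_of_length_eq_zero hr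
              subst hend
              have hwK : w ∈ K := hadjK hv ha
              exact ⟨w, hwK, by simp [fb, ha.symm, hb]⟩
    have hterm0 : (SpiderStmt10.spider (f u₀)).dist (some (Sum.inr (e v)))
        (some (Sum.inr (e v'))) ≤ 2 := by
      apply SpiderStmt10.dist_leaf_same
      rw [hf, hf, hsame]
    have hrest : ∑ u ∈ K.erase u₀,
        (SpiderStmt10.spider (f u)).dist (some (Sum.inr (e v))) (some (Sum.inr (e v')))
        ≤ (K.card - 1) * 4 := by
      have := Finset.sum_le_card_nsmul (K.erase u₀)
        (fun u => (SpiderStmt10.spider (f u)).dist (some (Sum.inr (e v))) (some (Sum.inr (e v'))))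
        4 (fun u _ => SpiderStmt10.dist_le_four _ _)
      rw [Finset.card_erase_of_mem hu₀] at this
      simpa [smul_eq_mul] using this
    have hsplit := Finset.add_sum_erase K
      (fun u => (SpiderStmt10.spider (f u)).dist (some (Sum.inr (e v))) (some (Sum.inr (e v'))))
      hu₀
    beta_reduce at hsplit
    have hgoal : ∑ u ∈ K, (SpiderStmt10.spider (f u)).dist (some (Sum.inr (e v)))
        (some (Sum.inr (e v'))) ≤ 4 * K.card - 1 := by
      omega
    exact hgoal
end

section
/- Let T be a finite tree, let S be a nonempty set of vertices of T, and let W = {w ∈ V(T) : there exist s, t ∈ S with d_T(s,w) + d_T(w,t) = d_T(s,t)}. Then for every vertex v of T there exists a gate g ∈ W such that d_T(v,w) = d_T(v,g) + d_T(g,w) for every w ∈ W; consequently, max_{s∈S} d_T(v,s) = d_T(v,g) + max_{s∈S} d_T(g,s). -/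
open SimpleGraph Walk

section aux
variable {V : Type*} [DecidableEq V] {T : SimpleGraph V}

/-- In a tree, every path realizes the distance. -/
lemma tree_path_len (hT : T.IsTree) {x y : V} {p : T.Walk x y} (hp : p.IsPath) :
    p.length = T.dist x y := by
  obtain ⟨q, hq⟩ := hT.isConnected.exists_walk_length_eq_dist x y
  have hqb : q.bypass.IsPath := q.bypass_isPath
  have hpq : p = q.bypass := by
    have := hT.IsAcyclic.path_unique ⟨p, hp⟩ ⟨q.bypass, hqb⟩
    exact congrArg Subtype.val this
  refine le_antisymm ?_ (T.dist_le p)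
  rw [hpq]
  calc q.bypass.length ≤ q.length := q.length_bypass_le
    _ = T.dist x y := hq

/-- Splitting a path at a vertex splits the distance. -/
lemma tree_split (hT : T.IsTree) {x y w : V} {p : T.Walk x y} (hp : p.IsPath)
    (hw : w ∈ p.support) : T.dist x w + T.dist w y = T.dist x y := by
  have h1 := tree_path_len hT (hp.takeUntil hw)
  have h2 := tree_path_len hT (hp.dropUntil hw)
  have h3 := tree_path_len hT hp
  have h4 := congrArg Walk.length (p.take_spec hw)
  rw [Walk.length_append] at h4
  omega

/-- A betweenness point lies on the (unique) path. -/
lemma tree_mem (hT : T.IsTree) {x y w : V} {p : T.Walk x y} (hp : p.IsPath)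
    (h : T.dist x w + T.dist w y = T.dist x y) : w ∈ p.support := by
  obtain ⟨q1, h1⟩ := hT.isConnected.exists_walk_length_eq_dist x w
  obtain ⟨q2, h2⟩ := hT.isConnected.exists_walk_length_eq_dist w y
  have hq : (q1.append q2).length = T.dist x y := by
    rw [Walk.length_append]; omega
  have hqp : (q1.append q2).IsPath := Walk.isPath_of_length_eq_dist _ hq
  have heq : q1.append q2 = p :=
    congrArg Subtype.val (hT.IsAcyclic.path_unique ⟨_, hqp⟩ ⟨p, hp⟩)
  rw [← heq, Walk.mem_support_append_iff]
  exact Or.inl q1.end_mem_support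

lemma appendPath {x m y : V} {p : T.Walk x m} {q : T.Walk m y} (hp : p.IsPath) (hq : q.IsPath)
    (h : ∀ u, u ∈ p.support → u ∈ q.support → u = m) : (p.append q).IsPath := by
  rw [Walk.isPath_def, Walk.support_append, List.nodup_append]
  have hqn : q.support.Nodup := hq.support_nodup
  have hcons : q.support = m :: q.support.tail := q.support_eq_cons
  rw [hcons, List.nodup_cons] at hqn
  refine ⟨hp.support_nodup, hqn.2, ?_⟩
  intro u hu b hut hub
  subst hub
  have : u ∈ q.support := by rw [hcons]; exact List.mem_cons_of_mem _ hut
  have := h u hu this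
  subst this
  exact hqn.1 hut

/-- Median construction: project `x` onto the path `p` from `y` to `z`. -/
lemma tree_median (hT : T.IsTree) (x : V) {y z : V} {p : T.Walk y z} (hp : p.IsPath) :
    ∃ m ∈ p.support, T.dist x y = T.dist x m + T.dist m y ∧
      T.dist x z = T.dist x m + T.dist m z := by
  have hne : p.support.toFinset.Nonempty := ⟨y, by simp⟩
  obtain ⟨m, hmF, hmin⟩ := p.support.toFinset.exists_min_image (fun u => T.dist x u) hne
  have hm : m ∈ p.support := List.mem_toFinset.mp hmF
  obtain ⟨q, hq, hqlen⟩ := hT.isConnected.exists_path_of_dist x m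
  have key : ∀ u, u ∈ q.support → u ∈ p.support → u = m := by
    intro u huq hup
    have h1 : T.dist x u + T.dist u m = T.dist x m := tree_split hT hq huq
    have h2 : T.dist x m ≤ T.dist x u := hmin u (List.mem_toFinset.mpr hup)
    have h3 : T.dist u m = 0 := by omega
    exact (hT.isConnected.dist_eq_zero_iff).mp h3
  refine ⟨m, hm, ?_, ?_⟩
  · -- append q with reversed takeUntil
    have hseg : (p.takeUntil m hm).IsPath := hp.takeUntil hm
    have hseg' : (p.takeUntil m hm).reverse.IsPath := hseg.reverse
    have hrp : (q.append (p.takeUntil m hm).reverse).IsPath := by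
      refine appendPath hq hseg' ?_
      intro u hu1 hu2
      rw [Walk.support_reverse, List.mem_reverse] at hu2
      exact key u hu1 (p.support_takeUntil_subset hm hu2)
    have hlen := tree_path_len hT hrp
    rw [Walk.length_append, Walk.length_reverse] at hlen
    have hseglen : (p.takeUntil m hm).length = T.dist y m := tree_path_len hT hseg
    have hcomm : T.dist y m = T.dist m y := T.dist_comm ..
    omega
  · have hseg : (p.dropUntil m hm).IsPath := hp.dropUntil hm
    have hrp : (q.append (p.dropUntil m hm)).IsPath := by
      refine appendPath hq hseg ?_
      intro u hu1 hu2
      exact key u hu1 (p.support_dropUntil_subset hm hu2)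
    have hlen := tree_path_len hT hrp
    rw [Walk.length_append] at hlen
    have hseglen : (p.dropUntil m hm).length = T.dist m z := tree_path_len hT hseg
    omega

/-- A point between `s` and `t` is between `g` and `s`, or between `g` and `t`. -/
lemma tree_L2 (hT : T.IsTree) {s t w : V} (g : V)
    (hw : T.dist s w + T.dist w t = T.dist s t) :
    T.dist g w + T.dist w s = T.dist g s ∨ T.dist g w + T.dist w t = T.dist g t := by
  obtain ⟨p, hp, _⟩ := hT.isConnected.exists_path_of_dist s t
  have hwp : w ∈ p.support := tree_mem hT hp hw
  obtain ⟨m, hm, h1, h2⟩ := tree_median hT g hp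
  have hms : T.dist s m + T.dist m t = T.dist s t := tree_split hT hp hm
  have hsplit := p.take_spec hm
  have hwcase : w ∈ (p.takeUntil m hm).support ∨ w ∈ (p.dropUntil m hm).support := by
    rw [← Walk.mem_support_append_iff, hsplit]; exact hwp
  have tri1 : T.dist g w ≤ T.dist g m + T.dist m w := hT.isConnected.dist_triangle
  have c1 : T.dist m w = T.dist w m := T.dist_comm ..
  have c2 : T.dist m s = T.dist s m := T.dist_comm ..
  have c3 : T.dist m t = T.dist t m := T.dist_comm ..
  rcases hwcase with hcase | hcase
  · left
    have hsw : T.dist s w + T.dist w m = T.dist s m := tree_split hT (hp.takeUntil hm) hcase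
    have tri2 : T.dist g s ≤ T.dist g w + T.dist w s := hT.isConnected.dist_triangle
    have c4 : T.dist w s = T.dist s w := T.dist_comm ..
    omega
  · right
    have hsw : T.dist m w + T.dist w t = T.dist m t := tree_split hT (hp.dropUntil hm) hcase
    have tri2 : T.dist g t ≤ T.dist g w + T.dist w t := hT.isConnected.dist_triangle
    omega

/-- Interval transitivity (metric). -/
lemma tree_L1 (hT : T.IsTree) {x w y u : V}
    (h1 : T.dist x w + T.dist w y = T.dist x y)
    (h2 : T.dist x u + T.dist u w = T.dist x w) :
    T.dist x u + T.dist u y = T.dist x y := by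
  have tri1 : T.dist x y ≤ T.dist x u + T.dist u y := hT.isConnected.dist_triangle
  have tri2 : T.dist u y ≤ T.dist u w + T.dist w y := hT.isConnected.dist_triangle
  omega

end aux

theorem stmt13 {V : Type*} [Fintype V] (T : SimpleGraph V) (hT : T.IsTree)
    (S : Finset V) (hS : S.Nonempty)
    (W : Finset V)
    (hW : ∀ w : V, w ∈ W ↔ ∃ s ∈ S, ∃ t ∈ S, T.dist s w + T.dist w t = T.dist s t)
    (v : V) :
    ∃ g ∈ W, (∀ w ∈ W, T.dist v w = T.dist v g + T.dist g w) ∧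
      S.sup (fun s => T.dist v s) = T.dist v g + S.sup (fun s => T.dist g s) := by
  classical
  have hSW : ∀ s ∈ S, s ∈ W := by
    intro s hs
    exact (hW s).mpr ⟨s, hs, s, hs, by simp⟩
  obtain ⟨s0, hs0⟩ := hS
  have hWne : W.Nonempty := ⟨s0, hSW s0 hs0⟩
  obtain ⟨g, hgW, hgmin⟩ := W.exists_min_image (fun u => T.dist v u) hWne
  have key : ∀ w ∈ W, T.dist v w = T.dist v g + T.dist g w := by
    intro w hwW
    obtain ⟨s', hs', t', ht', hw'⟩ := (hW w).mp hwW
    obtain ⟨s, hs, t, ht, hg'⟩ := (hW g).mp hgW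
    obtain ⟨p, hp, _⟩ := hT.isConnected.exists_path_of_dist g w
    obtain ⟨m, hm, hmv1, hmv2⟩ := tree_median hT v hp
    have hmgw : T.dist g m + T.dist m w = T.dist g w := tree_split hT hp hm
    -- m ∈ W
    have mmem : ∀ a ∈ S, T.dist g w + T.dist w a = T.dist g a → m ∈ W := by
      intro a ha H
      have Hm : T.dist g m + T.dist m a = T.dist g a := tree_L1 hT H hmgw
      have Hm' : T.dist a m + T.dist m g = T.dist a g := by
        have c1 : T.dist g m = T.dist m g := T.dist_comm ..
        have c2 : T.dist m a = T.dist a m := T.dist_comm ..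
        have c3 : T.dist g a = T.dist a g := T.dist_comm ..
        omega
      rcases tree_L2 hT a hg' with H2 | H2
      · exact (hW m).mpr ⟨a, ha, s, hs, tree_L1 hT H2 Hm'⟩
      · exact (hW m).mpr ⟨a, ha, t, ht, tree_L1 hT H2 Hm'⟩
    have hmW : m ∈ W := by
      rcases tree_L2 hT g hw' with H | H
      · exact mmem s' hs' H
      · exact mmem t' ht' H
    have hle : T.dist v g ≤ T.dist v m := hgmin m hmW
    have hmg0 : T.dist m g = 0 := by omega
    have : m = g := (hT.isConnected.dist_eq_zero_iff).mp hmg0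
    subst this
    omega
  refine ⟨g, hgW, key, ?_⟩
  obtain ⟨sm, hsm, hsmax⟩ := S.exists_max_image (fun s => T.dist g s) ⟨s0, hs0⟩
  have hsup : S.sup (fun s => T.dist g s) = T.dist g sm :=
    le_antisymm (Finset.sup_le fun b hb => hsmax b hb) (Finset.le_sup hsm)
  refine le_antisymm (Finset.sup_le fun b hb => ?_) ?_
  · rw [key b (hSW b hb)]
    exact Nat.add_le_add_left (Finset.le_sup hb) _
  · rw [hsup, ← key sm (hSW sm hsm)]
    exact Finset.le_sup hsm
end
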